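/- Gradient interpolation error on a simplex: let S be a simplex in R^d with affinely independent vertices, diameter h, and minimal height (distance from each vertex to the affine hull of the opposite face) at least rho > 0. If f is C^2 with Hessian operator norm bounded by M on S and f_hat is the barycentric interpolant of f on S, then the constant gradient of f_hat satisfies |grad f_hat - grad f(q)| <= C(d) * M * h^2 / rho for every q in S, where C(d) is a constant depending only on d. -/

import Mathlib

open RealInnerProductSpace

lemma aux_mem_span_of_weight_zero {E : Type} [NormedAddCommGroup E] [NormedSpace ℝ E]
    {n : ℕ} (p : Fin n → E) (i : Fin n) (W : Fin n → ℝ)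
    (hW : ∑ j, W j = 1) (hWi : W i = 0) :
    Finset.univ.affineCombination ℝ p W ∈ affineSpan ℝ (p '' {j | j ≠ i}) := by
  classical
  have hsub : ∀ (β : Type) (_ : AddCommGroup β) (f : Fin n → β), f i = 0 →
      ∑ j : {j : Fin n // j ≠ i}, f j = ∑ j, f j := by
    intro β _ f hfi
    rw [← Finset.sum_subtype (Finset.univ.filter (· ≠ i)) (by simp) f]
    apply Finset.sum_subset (Finset.filter_subset _ _)
    intro j _ hj
    simp only [Finset.mem_filter, Finset.mem_univ, true_and, not_not] at hj
    rw [hj, hfi]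
  set q : {j : Fin n // j ≠ i} → E := fun j => p j with hq
  set W' : {j : Fin n // j ≠ i} → ℝ := fun j => W j with hW'
  have hW'sum : ∑ j, W' j = 1 := by
    rw [hW']; rw [hsub ℝ inferInstance W hWi]; exact hW
  have hcomb : Finset.univ.affineCombination ℝ q W' = Finset.univ.affineCombination ℝ p W := by
    rw [Finset.univ.affineCombination_eq_linear_combination q W' hW'sum,
      Finset.univ.affineCombination_eq_linear_combination p W hW]
    exact hsub E inferInstance (fun j => W j • p j) (by simp [hWi])
  have hmem := affineCombination_mem_affineSpan (k := ℝ) (s := Finset.univ) (w := W') hW'sum q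
  rw [hcomb] at hmem
  have hrange : Set.range q = p '' {j | j ≠ i} := by
    ext x
    constructor
    · rintro ⟨⟨j, hj⟩, rfl⟩; exact ⟨j, hj, rfl⟩
    · rintro ⟨j, hj, rfl⟩; exact ⟨⟨j, hj⟩, rfl⟩
  rwa [hrange] at hmem

lemma coord_linear_norm_bound {d : ℕ} (b : AffineBasis (Fin (d + 1)) ℝ (EuclideanSpace ℝ (Fin d)))
    (i : Fin (d + 1)) {ρ : ℝ} (hρ : 0 < ρ)
    (hh : ρ ≤ Metric.infDist (b i)
        ((affineSpan ℝ (⇑b '' {j | j ≠ i}) : AffineSubspace ℝ (EuclideanSpace ℝ (Fin d))) :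
          Set (EuclideanSpace ℝ (Fin d))))
    (v : EuclideanSpace ℝ (Fin d)) :
    |(b.coord i).linear v| ≤ ρ⁻¹ * ‖v‖ := by
  classical
  set ℓ : EuclideanSpace ℝ (Fin d) →ₗ[ℝ] ℝ := (b.coord i).linear with hℓ
  have hcont : Continuous ℓ := ℓ.continuous_of_finiteDimensional
  set L : EuclideanSpace ℝ (Fin d) →L[ℝ] ℝ := ⟨ℓ, hcont⟩ with hL
  set w : EuclideanSpace ℝ (Fin d) := (InnerProductSpace.toDual ℝ _).symm L with hwdef
  have hw : ∀ x : EuclideanSpace ℝ (Fin d), ⟪w, x⟫ = ℓ x := fun x =>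
    InnerProductSpace.toDual_symm_apply
  by_cases hw0 : w = 0
  · have hv0 : ℓ v = 0 := by rw [← hw v, hw0, inner_zero_left]
    rw [hv0, abs_zero]
    positivity
  · have hnw : 0 < ‖w‖ := norm_pos_iff.mpr hw0
    set t : ℝ := (‖w‖ ^ 2)⁻¹ with ht
    set p : EuclideanSpace ℝ (Fin d) := b i - t • w with hp
    have hlw : ℓ w = ‖w‖ ^ 2 := by rw [← hw w, real_inner_self_eq_norm_sq]
    have hcoordp : b.coord i p = 0 := by
      have h1 : p = (-(t • w)) +ᵥ (b i) := by
        rw [hp, vadd_eq_add]; abel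
      rw [h1, AffineMap.map_vadd, vadd_eq_add]
      have h2 : (b.coord i).linear (-(t • w)) = -1 := by
        rw [← hℓ, map_neg, map_smul, smul_eq_mul, hlw, ht]
        field_simp
      rw [h2, AffineBasis.coord_apply_eq]
      ring
    have hWsum : ∑ j, b.coord j p = 1 := b.sum_coord_apply_eq_one p
    have hpcomb : Finset.univ.affineCombination ℝ ⇑b (fun j => b.coord j p) = p :=
      b.affineCombination_coord_eq_self p
    have hmem : p ∈ affineSpan ℝ (⇑b '' {j | j ≠ i}) := by
      rw [← hpcomb]
      exact aux_mem_span_of_weight_zero ⇑b i _ hWsum hcoordp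
    have hdist : Metric.infDist (b i)
        ((affineSpan ℝ (⇑b '' {j | j ≠ i}) :
          AffineSubspace ℝ (EuclideanSpace ℝ (Fin d))) : Set (EuclideanSpace ℝ (Fin d)))
        ≤ dist (b i) p :=
      Metric.infDist_le_dist_of_mem hmem
    have hdp : dist (b i) p = ‖w‖⁻¹ := by
      rw [dist_eq_norm, hp]
      have h3 : b i - (b i - t • w) = t • w := by abel
      rw [h3, norm_smul, ht, Real.norm_eq_abs, abs_of_nonneg (by positivity), pow_two]
      field_simp
    have hwle : ‖w‖ ≤ ρ⁻¹ := by
      have h5 : ρ ≤ ‖w‖⁻¹ := le_trans hh (hdist.trans_eq hdp)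
      have h6 : ‖w‖ * ρ ≤ 1 := by
        calc ‖w‖ * ρ ≤ ‖w‖ * ‖w‖⁻¹ := mul_le_mul_of_nonneg_left h5 (le_of_lt hnw)
          _ = 1 := mul_inv_cancel₀ hnw.ne'
      have h7 : ρ⁻¹ * ρ = 1 := inv_mul_cancel₀ hρ.ne'
      nlinarith [inv_nonneg.mpr hρ.le]
    calc |ℓ v| = |⟪w, v⟫| := by rw [hw]
      _ ≤ ‖w‖ * ‖v‖ := abs_real_inner_le_norm w v
      _ ≤ ρ⁻¹ * ‖v‖ := mul_le_mul_of_nonneg_right hwle (norm_nonneg v)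

/-- Gradient interpolation error on a simplex: there is a constant `C(d)`,
depending only on `d`, such that for every simplex with diameter `h` and
minimal vertex height at least `ρ`, and every `C²` function `f` with Hessian
norm at most `M` on the simplex, the constant gradient `a` of the barycentric
(affine) interpolant satisfies `‖a - ∇f q‖ ≤ C(d) M h² / ρ` on the simplex. -/
theorem gradient_interpolation_error (d : ℕ) :
    ∃ C : ℝ, 0 < C ∧
      ∀ (s : Fin (d + 1) → EuclideanSpace ℝ (Fin d)),
        AffineIndependent ℝ s →
        ∀ (S : Set (EuclideanSpace ℝ (Fin d))),
          S = convexHull ℝ (Set.range s) →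
          ∀ (ρ : ℝ), 0 < ρ →
            (∀ i : Fin (d + 1),
              ρ ≤ Metric.infDist (s i)
                    (affineSpan ℝ (s '' {j | j ≠ i}) : Set (EuclideanSpace ℝ (Fin d)))) →
            ∀ (f : EuclideanSpace ℝ (Fin d) → ℝ)
              (U : Set (EuclideanSpace ℝ (Fin d))),
              IsOpen U → Convex ℝ U → S ⊆ U → ContDiffOn ℝ 2 f U →
              ∀ (M : ℝ),
                (∀ x ∈ S, ‖iteratedFDerivWithin ℝ 2 f U x‖ ≤ M) →
                ∀ (a : EuclideanSpace ℝ (Fin d)) (c : ℝ),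
                  (∀ i, (inner ℝ a (s i) : ℝ) + c = f (s i)) →
                  ∀ q ∈ S,
                    ‖a - gradient f q‖ ≤ C * M * Metric.diam S ^ 2 / ρ := by
  classical
  refine ⟨2 * ((d : ℝ) + 1), by positivity, ?_⟩
  intro s hind S hS ρ hρ hheight f U hUo hUconv hSU hf M hM a c hinterp q hq
  have hSconv : Convex ℝ S := hS ▸ convex_convexHull ℝ _
  have hSbd : Bornology.IsBounded S := by
    rw [hS]; exact ((Set.finite_range s).isCompact_convexHull ℝ).isBounded
  set h := Metric.diam S with hdh
  have hdiam : ∀ x ∈ S, ∀ y ∈ S, ‖x - y‖ ≤ h := fun x hx y hy => by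
    rw [← dist_eq_norm]; exact Metric.dist_le_diam_of_mem hSbd hx hy
  have hsS : ∀ i, s i ∈ S := fun i => hS ▸ subset_convexHull ℝ _ ⟨i, rfl⟩
  have hM0 : 0 ≤ M := le_trans (norm_nonneg _) (hM (s 0) (hsS 0))
  have h0 : 0 ≤ h := Metric.diam_nonneg
  -- derivative facts
  have hUu : UniqueDiffOn ℝ U := hUo.uniqueDiffOn
  have hqU : q ∈ U := hSU hq
  set F := fderivWithin ℝ f U with hF
  have hfd : DifferentiableOn ℝ f U := hf.differentiableOn (by norm_num)
  have hFc : ContDiffOn ℝ 1 F U := hf.fderivWithin hUu (by norm_num)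
  have hFd : DifferentiableOn ℝ F U := hFc.differentiableOn (by norm_num)
  have hnorm2 : ∀ x ∈ S, ‖fderivWithin ℝ F U x‖ ≤ M := by
    intro x hx
    have hxU := hSU hx
    calc ‖fderivWithin ℝ F U x‖
        = ‖iteratedFDerivWithin ℝ 0 (fderivWithin ℝ F U) U x‖ :=
          by rw [norm_iteratedFDerivWithin_zero]
      _ = ‖iteratedFDerivWithin ℝ 1 F U x‖ :=
          norm_iteratedFDerivWithin_fderivWithin hUu hxU
      _ = ‖iteratedFDerivWithin ℝ 2 f U x‖ := by
          rw [hF]; exact norm_iteratedFDerivWithin_fderivWithin hUu hxU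
      _ ≤ M := hM x hx
  have stepA : ∀ y ∈ S, ‖F y - F q‖ ≤ M * h := by
    intro y hy
    have hstep := Convex.norm_image_sub_le_of_norm_hasFDerivWithin_le
      (f := F) (f' := fun x => fderivWithin ℝ F U x) (C := M) (s := S)
      (fun x hx => ((hFd x (hSU hx)).hasFDerivWithinAt).mono hSU) hnorm2 hSconv hq hy
    calc ‖F y - F q‖ ≤ M * ‖y - q‖ := hstep
      _ ≤ M * h := mul_le_mul_of_nonneg_left (hdiam y hy q hq) hM0
  have stepB : ∀ y ∈ S, ‖f y - f q - F q (y - q)‖ ≤ M * h * h := by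
    intro y hy
    have hstep := Convex.norm_image_sub_le_of_norm_hasFDerivWithin_le'
      (f := f) (f' := fun x => F x) (φ := F q) (C := M * h) (s := S)
      (fun x hx => ((hfd x (hSU hx)).hasFDerivWithinAt).mono hSU)
      (fun x hx => stepA x hx) hSconv hq hy
    calc ‖f y - f q - F q (y - q)‖ ≤ M * h * ‖y - q‖ := hstep
      _ ≤ M * h * h := mul_le_mul_of_nonneg_left (hdiam y hy q hq) (by positivity)
  -- gradient
  have hgrad : ∀ u, ⟪gradient f q, u⟫ = F q u := by
    intro u
    rw [hF, fderivWithin_of_isOpen hUo hqU]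
    exact InnerProductSpace.toDual_symm_apply
  set v := a - gradient f q with hv
  have hkey : ∀ i, |⟪v, s i - s 0⟫| ≤ 2 * (M * h * h) := by
    intro i
    have e1 : ⟪a, s i - s 0⟫ = f (s i) - f (s 0) := by
      rw [inner_sub_right]
      have h1 := hinterp i
      have h2 := hinterp 0
      linarith
    have e2 : ⟪gradient f q, s i - s 0⟫ = F q (s i - q) - F q (s 0 - q) := by
      rw [hgrad, show s i - s 0 = (s i - q) - (s 0 - q) by abel, map_sub]
    have e3 : ⟪v, s i - s 0⟫ =
        (f (s i) - f q - F q (s i - q)) - (f (s 0) - f q - F q (s 0 - q)) := by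
      rw [hv, inner_sub_left, e1, e2]; ring
    rw [e3]
    have b1 := stepB (s i) (hsS i)
    have b2 := stepB (s 0) (hsS 0)
    rw [Real.norm_eq_abs] at b1 b2
    have habs' : ∀ X Y : ℝ, |X - Y| ≤ |X| + |Y| := fun X Y => by
      simpa [sub_eq_add_neg] using abs_add_le X (-Y)
    have habs := habs' (f (s i) - f q - F q (s i - q)) (f (s 0) - f q - F q (s 0 - q))
    linarith
  -- affine basis
  have htot : affineSpan ℝ (Set.range s) = ⊤ := by
    rw [hind.affineSpan_eq_top_iff_card_eq_finrank_add_one]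
    simp [finrank_euclideanSpace_fin]
  set b : AffineBasis (Fin (d + 1)) ℝ (EuclideanSpace ℝ (Fin d)) := ⟨s, hind, htot⟩ with hb
  have hbc : ⇑b = s := rfl
  have hlin : ∀ i (u : EuclideanSpace ℝ (Fin d)),
      (b.coord i).linear u = b.coord i u - b.coord i 0 := by
    intro i u
    have hvadd := (b.coord i).map_vadd (0 : EuclideanSpace ℝ (Fin d)) u
    rw [vadd_eq_add, add_zero, vadd_eq_add] at hvadd
    linarith
  have hsum0 : ∑ i, (b.coord i).linear v = 0 := by
    simp only [hlin]
    rw [Finset.sum_sub_distrib]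
    simp [b.sum_coord_apply_eq_one]
  have hdecomp : ∑ i, (b.coord i).linear v • s i = v := by
    simp only [hlin, sub_smul]
    rw [Finset.sum_sub_distrib]
    have h1 : ∑ i, b.coord i v • s i = v := by
      rw [← hbc]; exact b.linear_combination_coord_eq_self v
    have h2 : ∑ i, b.coord i (0 : EuclideanSpace ℝ (Fin d)) • s i = 0 := by
      rw [← hbc]; exact b.linear_combination_coord_eq_self 0
    rw [h1, h2, sub_zero]
  have hnormbd : ∀ i, |(b.coord i).linear v| ≤ ρ⁻¹ * ‖v‖ := by
    intro i
    apply coord_linear_norm_bound b i hρ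
    rw [show (b i) = s i from rfl, show ⇑b = s from rfl]
    exact hheight i
  have hid : ‖v‖ ^ 2 = ∑ i, (b.coord i).linear v * ⟪v, s i - s 0⟫ := by
    have hvv : ⟪v, v⟫ = ∑ i, (b.coord i).linear v * ⟪v, s i⟫ := by
      have hswap : ∑ i, (b.coord i).linear v * ⟪v, s i⟫ =
          ⟪v, ∑ i, (b.coord i).linear v • s i⟫ := by
        rw [inner_sum]
        exact (Finset.sum_congr rfl fun i _ => (real_inner_smul_right _ _ _)).symm
      rw [hswap, hdecomp]
    calc ‖v‖ ^ 2 = ⟪v, v⟫ := (real_inner_self_eq_norm_sq v).symm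
      _ = ∑ i, (b.coord i).linear v * ⟪v, s i⟫ := hvv
      _ = ∑ i, (b.coord i).linear v * ⟪v, s i - s 0⟫ := by
          simp only [inner_sub_right, mul_sub]
          rw [Finset.sum_sub_distrib, ← Finset.sum_mul, hsum0, zero_mul, sub_zero]
  have hfinal : ‖v‖ ^ 2 ≤ ((d : ℝ) + 1) * (ρ⁻¹ * ‖v‖ * (2 * (M * h * h))) := by
    rw [hid]
    have hb1 : ∀ i ∈ Finset.univ,
        (b.coord i).linear v * ⟪v, s i - s 0⟫ ≤ ρ⁻¹ * ‖v‖ * (2 * (M * h * h)) := by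
      intro i _
      calc (b.coord i).linear v * ⟪v, s i - s 0⟫
          ≤ |(b.coord i).linear v * ⟪v, s i - s 0⟫| := le_abs_self _
        _ = |(b.coord i).linear v| * |⟪v, s i - s 0⟫| := abs_mul _ _
        _ ≤ ρ⁻¹ * ‖v‖ * (2 * (M * h * h)) :=
            mul_le_mul (hnormbd i) (hkey i) (abs_nonneg _) (by positivity)
    calc ∑ i, (b.coord i).linear v * ⟪v, s i - s 0⟫
        ≤ ∑ _i : Fin (d + 1), ρ⁻¹ * ‖v‖ * (2 * (M * h * h)) := Finset.sum_le_sum hb1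
      _ = ((d : ℝ) + 1) * (ρ⁻¹ * ‖v‖ * (2 * (M * h * h))) := by
          rw [Finset.sum_const, Finset.card_univ, Fintype.card_fin, nsmul_eq_mul]
          push_cast; ring
  have hRHS : 2 * ((d : ℝ) + 1) * M * h ^ 2 / ρ = ((d : ℝ) + 1) * (ρ⁻¹ * (2 * (M * h * h))) := by
    field_simp
  rcases eq_or_lt_of_le (norm_nonneg v) with h0v | h0v
  · rw [show ‖a - gradient f q‖ = ‖v‖ from rfl, ← h0v, hRHS]
    positivity
  · have hle : ‖v‖ ≤ ((d : ℝ) + 1) * (ρ⁻¹ * (2 * (M * h * h))) := by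
      have hmul : ‖v‖ * ‖v‖ ≤ (((d : ℝ) + 1) * (ρ⁻¹ * (2 * (M * h * h)))) * ‖v‖ := by
        nlinarith [hfinal]
      exact le_of_mul_le_mul_right hmul h0v
    rw [show ‖a - gradient f q‖ = ‖v‖ from rfl, hRHS]
    exact hle
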